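/- arXiv:1511.06817 — 2 statements merged into one kernel-verified Lean document; each statement's English description precedes it below -/
import Mathlib

section
/- For the Drude-type constants C_μ = (μ_c ε_c − μ_m ε_m)/(μ_m − μ_c), C_ε = (μ_c ε_c − μ_m ε_m)/(ε_m − ε_c), the scalar second-order eigenvalue corrections of the 4×4 matrix W(r) = W₀ + rW₁ + r²W₂ (with W₀ = diag(λ_μ + 1/(2(2n+1)), λ_μ − 1/(2(2n+1)), λ_ε + 1/(2(2n+1)), λ_ε − 1/(2(2n+1))), W₁ having ω C_μ p_n, ω C_μ q_n, ω C_ε p_n, ω C_ε q_n in the antidiagonal positions as specified, and W₂ = ω² diag(D_μ r_n, D_μ s_n, D_ε r_n, D_ε s_n)) are: the first eigenvalue satisfies τ₁(r) = λ_μ + 1/(2(2n+1)) + (rω)²[C_ε C_μ p_n q_n/(λ_μ − λ_ε + p_n) + D_μ r_n] + O(r³), assuming λ_μ − λ_ε ± p_n ≠ 0. -/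
open Asymptotics Filter in
private lemma scalar_asymp_aux (A B E : ℂ) (hA : A ≠ 0) (δ : ℝ → ℂ)
    (hδc : Filter.Tendsto δ (nhds 0) (nhds 0))
    (heq : ∀ᶠ r : ℝ in nhds 0, δ r * (A + (r:ℂ)^2 * E + δ r) = (r:ℂ)^2 * B) :
    (fun r : ℝ => δ r - (r:ℂ)^2 * B / A) =O[nhds 0] fun r => r^3 := by
  have hA' : 0 < ‖A‖ := norm_pos_iff.mpr hA
  have hd : Filter.Tendsto (fun r : ℝ => A + (r:ℂ)^2*E + δ r) (nhds 0) (nhds A) := by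
    have h1 : Filter.Tendsto (fun r : ℝ => A + (r:ℂ)^2*E) (nhds 0) (nhds (A + ((0:ℝ):ℂ)^2*E)) := by
      exact tendsto_const_nhds.add (((Complex.continuous_ofReal.tendsto 0).pow 2).mul_const E)
    have := h1.add hδc
    simpa using this
  have hlb : ∀ᶠ r : ℝ in nhds 0, ‖A‖/2 < ‖A + (r:ℂ)^2*E + δ r‖ :=
    hd.norm.eventually (eventually_gt_nhds (by linarith))
  have habs : ∀ᶠ r : ℝ in nhds 0, |r| ≤ 1 := by
    filter_upwards [eventually_abs_sub_lt (0:ℝ) one_pos] with r hr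
    simpa using le_of_lt (by simpa using hr)
  rw [Asymptotics.isBigO_iff]
  refine ⟨(2*‖B‖/‖A‖) * (‖E‖ + 2*‖B‖/‖A‖) / ‖A‖, ?_⟩
  filter_upwards [heq, hlb, habs] with r hr hlbr habsr
  have hDpos : 0 < ‖A + (r:ℂ)^2*E + δ r‖ := lt_of_le_of_lt (by positivity) hlbr
  have hD : (A + (r:ℂ)^2*E + δ r) ≠ 0 := norm_pos_iff.mp hDpos
  have hr2 : ‖((r:ℂ))^2‖ = r^2 := by
    rw [norm_pow, Complex.norm_real, Real.norm_eq_abs, sq_abs]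
  have hnδ : ‖δ r‖ ≤ 2*‖B‖/‖A‖ * r^2 := by
    have hδr : δ r = (r:ℂ)^2*B / (A + (r:ℂ)^2*E + δ r) := by
      rw [eq_div_iff hD]; exact hr
    rw [hδr, norm_div, norm_mul, hr2, div_le_iff₀ hDpos]
    rw [div_mul_eq_mul_div, div_mul_eq_mul_div, le_div_iff₀ hA']
    nlinarith [mul_le_mul_of_nonneg_left (le_of_lt hlbr) (show (0:ℝ) ≤ 2*‖B‖*r^2 by positivity)]
  have hid : δ r - (r:ℂ)^2*B/A = -(δ r * ((r:ℂ)^2*E + δ r))/A := by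
    rw [eq_div_iff hA, sub_mul, div_mul_cancel₀ _ hA]
    linear_combination hr
  rw [hid, norm_div, norm_neg, norm_mul]
  have hy : ‖(r:ℂ)^2*E + δ r‖ ≤ (‖E‖ + 2*‖B‖/‖A‖)*r^2 := by
    refine (norm_add_le _ _).trans ?_
    rw [norm_mul, hr2]
    nlinarith [hnδ, sq_nonneg r, norm_nonneg E]
  have hr4 : r^2*r^2 ≤ |r|^3 := by
    have h1 : r^2*r^2 = |r|^3*|r| := by rw [← sq_abs]; ring
    rw [h1]
    nlinarith [abs_nonneg r, pow_nonneg (abs_nonneg r) 3]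
  have hnum : ‖δ r‖ * ‖(r:ℂ)^2*E + δ r‖ ≤ (2*‖B‖/‖A‖) * (‖E‖ + 2*‖B‖/‖A‖) * |r|^3 := by
    calc ‖δ r‖ * ‖(r:ℂ)^2*E + δ r‖
        ≤ (2*‖B‖/‖A‖ * r^2) * ((‖E‖ + 2*‖B‖/‖A‖)*r^2) :=
          mul_le_mul hnδ hy (norm_nonneg _) (by positivity)
      _ = (2*‖B‖/‖A‖) * (‖E‖ + 2*‖B‖/‖A‖) * (r^2*r^2) := by ring
      _ ≤ (2*‖B‖/‖A‖) * (‖E‖ + 2*‖B‖/‖A‖) * |r|^3 := by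
          have : (0:ℝ) ≤ (2*‖B‖/‖A‖) * (‖E‖ + 2*‖B‖/‖A‖) := by positivity
          nlinarith [hr4]
  have h3 : ‖(r:ℝ)^3‖ = |r|^3 := by rw [Real.norm_eq_abs, abs_pow]
  rw [h3, div_mul_eq_mul_div]
  gcongr



open Asymptotics Filter Matrix

noncomputable section

/-- `λ_μ = (μ_c+μ_m)/(2(μ_m−μ_c))`. -/
def lamMu (μc μm : ℂ) : ℂ := (μc + μm) / (2 * (μm - μc))

/-- `λ_ε = (ε_c+ε_m)/(2(ε_m−ε_c))`. -/
def lamEps (εc εm : ℂ) : ℂ := (εc + εm) / (2 * (εm - εc))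

/-- `p_n = 1/(2n+1)`. -/
def pCoef (n : ℕ) : ℂ := 1 / (2 * (n : ℂ) + 1)

/-- `q_n = (n+1)(n−2)/(2(2n−1)(2n+1)) − n(n+3)/(2(2n+1)(2n+3))`. -/
def qCoef (n : ℕ) : ℂ :=
  ((n : ℂ) + 1) * ((n : ℂ) - 2) / (2 * (2 * (n : ℂ) - 1) * (2 * (n : ℂ) + 1)) -
    (n : ℂ) * ((n : ℂ) + 3) / (2 * (2 * (n : ℂ) + 1) * (2 * (n : ℂ) + 3))

/-- `r_n = −(n+1)/(2(2n−1)(2n+1)) + (n+3)/(2(2n+1)(2n+3))`. -/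
def rCoef (n : ℕ) : ℂ :=
  -(((n : ℂ) + 1) / (2 * (2 * (n : ℂ) - 1) * (2 * (n : ℂ) + 1))) +
    ((n : ℂ) + 3) / (2 * (2 * (n : ℂ) + 1) * (2 * (n : ℂ) + 3))

/-- `s_n = −(n−2)/(2(2n−1)(2n+1)) + n/(2(2n+1)(2n+3))`. -/
def sCoef (n : ℕ) : ℂ :=
  -((((n : ℂ) - 2)) / (2 * (2 * (n : ℂ) - 1) * (2 * (n : ℂ) + 1))) +
    (n : ℂ) / (2 * (2 * (n : ℂ) + 1) * (2 * (n : ℂ) + 3))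

/-- `C_μ = (μ_cε_c − μ_mε_m)/(μ_m − μ_c)`. -/
def cMu (μc μm εc εm : ℂ) : ℂ := (μc * εc - μm * εm) / (μm - μc)

/-- `C_ε = (μ_cε_c − μ_mε_m)/(ε_m − ε_c)`. -/
def cEps (μc μm εc εm : ℂ) : ℂ := (μc * εc - μm * εm) / (εm - εc)

/-- `D_μ = (ε_cμ_c² − ε_mμ_m²)/(μ_m − μ_c)`. -/
def dMu (μc μm εc εm : ℂ) : ℂ := (εc * μc ^ 2 - εm * μm ^ 2) / (μm - μc)

/-- `D_ε = (ε_c²μ_c − ε_m²μ_m)/(ε_m − ε_c)`. -/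
def dEps (μc μm εc εm : ℂ) : ℂ := (εc ^ 2 * μc - εm ^ 2 * μm) / (εm - εc)

/-- `W₀ = diag(λ_μ + 1/(2(2n+1)), λ_μ − 1/(2(2n+1)), λ_ε + 1/(2(2n+1)), λ_ε − 1/(2(2n+1)))`. -/
def W0mat (n : ℕ) (μc μm εc εm : ℂ) : Matrix (Fin 4) (Fin 4) ℂ :=
  Matrix.diagonal
    ![lamMu μc μm + 1 / (2 * (2 * (n : ℂ) + 1)),
      lamMu μc μm - 1 / (2 * (2 * (n : ℂ) + 1)),
      lamEps εc εm + 1 / (2 * (2 * (n : ℂ) + 1)),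
      lamEps εc εm - 1 / (2 * (2 * (n : ℂ) + 1))]

/-- `W₁` with entries `(W₁)₁₄ = ωC_μp_n`, `(W₁)₂₃ = ωC_μq_n`, `(W₁)₃₂ = ωC_εp_n`,
`(W₁)₄₁ = ωC_εq_n`, all other entries zero. -/
def W1mat (n : ℕ) (μc μm εc εm ω : ℂ) : Matrix (Fin 4) (Fin 4) ℂ :=
  !![0, 0, 0, ω * cMu μc μm εc εm * pCoef n;
     0, 0, ω * cMu μc μm εc εm * qCoef n, 0;
     0, ω * cEps μc μm εc εm * pCoef n, 0, 0;
     ω * cEps μc μm εc εm * qCoef n, 0, 0, 0]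

/-- `W₂ = ω² diag(D_μr_n, D_μs_n, D_εr_n, D_εs_n)`. -/
def W2mat (n : ℕ) (μc μm εc εm ω : ℂ) : Matrix (Fin 4) (Fin 4) ℂ :=
  Matrix.diagonal
    ![ω ^ 2 * dMu μc μm εc εm * rCoef n,
      ω ^ 2 * dMu μc μm εc εm * sCoef n,
      ω ^ 2 * dEps μc μm εc εm * rCoef n,
      ω ^ 2 * dEps μc μm εc εm * sCoef n]

/-- `W(r) = W₀ + rW₁ + r²W₂`. -/
def Wmat (n : ℕ) (μc μm εc εm ω : ℂ) (r : ℝ) : Matrix (Fin 4) (Fin 4) ℂ :=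
  W0mat n μc μm εc εm + (r : ℂ) • W1mat n μc μm εc εm ω +
    ((r : ℂ)) ^ 2 • W2mat n μc μm εc εm ω

end

/-- the eigenvalue of `W(r) = W₀ + rW₁ + r²W₂` continuing the
first diagonal entry `λ_μ + 1/(2(2n+1))` satisfies
`τ₁(r) = λ_μ + 1/(2(2n+1)) + (rω)²[C_εC_μp_nq_n/(λ_μ − λ_ε + p_n) + D_μr_n] + O(r³)`,
assuming `λ_μ − λ_ε ± p_n ≠ 0` (and `λ_μ ≠ λ_ε`). -/
theorem sphere_second_order_eigenvalue_correction
    (n : ℕ) (hn : 1 ≤ n) (μc μm εc εm ω : ℂ)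
    (hμ : μm ≠ μc) (hε : εm ≠ εc)
    (hne : lamMu μc μm ≠ lamEps εc εm)
    (hplus : lamMu μc μm - lamEps εc εm + pCoef n ≠ 0)
    (hminus : lamMu μc μm - lamEps εc εm - pCoef n ≠ 0)
    (τ₁ : ℝ → ℂ)
    (hτ0 : τ₁ 0 = lamMu μc μm + 1 / (2 * (2 * (n : ℂ) + 1)))
    (hτc : ContinuousAt τ₁ 0)
    (hτeig : ∀ r : ℝ, ∃ v : Fin 4 → ℂ, v ≠ 0 ∧
        (Wmat n μc μm εc εm ω r).mulVec v = τ₁ r • v) :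
    (fun r : ℝ => τ₁ r -
        (lamMu μc μm + 1 / (2 * (2 * (n : ℂ) + 1)) +
          ((r : ℂ) * ω) ^ 2 *
            (cEps μc μm εc εm * cMu μc μm εc εm * pCoef n * qCoef n /
                (lamMu μc μm - lamEps εc εm + pCoef n) +
              dMu μc μm εc εm * rCoef n)))
      =O[nhds 0] fun r : ℝ => r ^ 3 := by
  have h2n1 : (2*(n:ℂ)+1) ≠ 0 := by
    have h : ((2*n+1 : ℕ) : ℂ) ≠ 0 := Nat.cast_ne_zero.mpr (Nat.succ_ne_zero _)
    have h2 : ((2*n+1 : ℕ) : ℂ) = 2*(n:ℂ)+1 := by push_cast; ring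
    rwa [h2] at h
  have hp' : (1/(2*(n:ℂ)+1) : ℂ) ≠ 0 := one_div_ne_zero h2n1
  have hhalf : (1:ℂ)/(2*(2*(n:ℂ)+1)) = (1/(2*(n:ℂ)+1))/2 := by
    rw [one_div, mul_inv]; ring
  have hτ0'' : τ₁ 0 = lamMu μc μm + (1/(2*(n:ℂ)+1))/2 := by rw [hτ0, hhalf]
  have hplus' : lamMu μc μm - lamEps εc εm + 1/(2*(n:ℂ)+1) ≠ 0 := by
    simp only [pCoef] at hplus; exact hplus
  have hcr : ContinuousAt (fun r : ℝ => ((r:ℝ):ℂ)) 0 := Complex.continuous_ofReal.continuousAt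
  -- continuity of the second-block determinant along τ₁
  have hG : ContinuousAt (fun r : ℝ => (((lamMu μc μm - (1/(2*(n:ℂ)+1))/2 + (((r):ℝ):ℂ)^2*(ω^2*dMu μc μm εc εm*sCoef n)) - τ₁ (r)) * ((lamEps εc εm + (1/(2*(n:ℂ)+1))/2 + (((r):ℝ):ℂ)^2*(ω^2*dEps μc μm εc εm*rCoef n)) - τ₁ (r)) - (((r):ℝ):ℂ)^2*((ω*cMu μc μm εc εm*qCoef n)*(ω*cEps μc μm εc εm*(1/(2*(n:ℂ)+1)))))) 0 :=
    (((continuousAt_const.add ((hcr.pow 2).mul continuousAt_const)).sub hτc).mul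
      ((continuousAt_const.add ((hcr.pow 2).mul continuousAt_const)).sub hτc)).sub
      ((hcr.pow 2).mul continuousAt_const)
  have hG0 : (((lamMu μc μm - (1/(2*(n:ℂ)+1))/2 + (((0):ℝ):ℂ)^2*(ω^2*dMu μc μm εc εm*sCoef n)) - τ₁ (0)) * ((lamEps εc εm + (1/(2*(n:ℂ)+1))/2 + (((0):ℝ):ℂ)^2*(ω^2*dEps μc μm εc εm*rCoef n)) - τ₁ (0)) - (((0):ℝ):ℂ)^2*((ω*cMu μc μm εc εm*qCoef n)*(ω*cEps μc μm εc εm*(1/(2*(n:ℂ)+1))))) ≠ 0 := by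
    have hval : (((lamMu μc μm - (1/(2*(n:ℂ)+1))/2 + (((0):ℝ):ℂ)^2*(ω^2*dMu μc μm εc εm*sCoef n)) - τ₁ (0)) * ((lamEps εc εm + (1/(2*(n:ℂ)+1))/2 + (((0):ℝ):ℂ)^2*(ω^2*dEps μc μm εc εm*rCoef n)) - τ₁ (0)) - (((0):ℝ):ℂ)^2*((ω*cMu μc μm εc εm*qCoef n)*(ω*cEps μc μm εc εm*(1/(2*(n:ℂ)+1))))) = (-(1/(2*(n:ℂ)+1))) * (lamEps εc εm - lamMu μc μm) := by
      rw [hτ0'']; push_cast; ring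
    rw [hval]
    exact mul_ne_zero (neg_ne_zero.mpr hp') (sub_ne_zero.mpr (Ne.symm hne))
  have hGne : ∀ᶠ r : ℝ in nhds 0, (((lamMu μc μm - (1/(2*(n:ℂ)+1))/2 + (((r):ℝ):ℂ)^2*(ω^2*dMu μc μm εc εm*sCoef n)) - τ₁ (r)) * ((lamEps εc εm + (1/(2*(n:ℂ)+1))/2 + (((r):ℝ):ℂ)^2*(ω^2*dEps μc μm εc εm*rCoef n)) - τ₁ (r)) - (((r):ℝ):ℂ)^2*((ω*cMu μc μm εc εm*qCoef n)*(ω*cEps μc μm εc εm*(1/(2*(n:ℂ)+1))))) ≠ 0 := hG.eventually_ne hG0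
  -- the eventual quadratic equation for the first block
  have heq : ∀ᶠ r : ℝ in nhds 0,
      (τ₁ (r) - (lamMu μc μm + (1/(2*(n:ℂ)+1))/2 + (((r):ℝ):ℂ)^2*(ω^2*dMu μc μm εc εm*rCoef n))) * ((lamMu μc μm - lamEps εc εm + (1/(2*(n:ℂ)+1))) + ((r:ℝ):ℂ)^2 * (ω^2*(dMu μc μm εc εm*rCoef n - dEps μc μm εc εm*sCoef n)) + (τ₁ (r) - (lamMu μc μm + (1/(2*(n:ℂ)+1))/2 + (((r):ℝ):ℂ)^2*(ω^2*dMu μc μm εc εm*rCoef n)))) = ((r:ℝ):ℂ)^2 * (ω^2*cMu μc μm εc εm*cEps μc μm εc εm*(1/(2*(n:ℂ)+1))*qCoef n) := by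
    filter_upwards [hGne] with r hGr
    obtain ⟨v, hv, hmv⟩ := hτeig r
    have h0 := congrFun hmv 0
    have h1 := congrFun hmv 1
    have h2 := congrFun hmv 2
    have h3 := congrFun hmv 3
    simp [Wmat, W0mat, W2mat, W1mat, Matrix.mulVec, dotProduct, Fin.sum_univ_four,
      Matrix.add_apply, Matrix.smul_apply, Matrix.diagonal_apply, Matrix.cons_val_zero,
      Matrix.cons_val_one, Matrix.head_cons, Matrix.cons_val_two, Matrix.cons_val_three,
      Matrix.tail_cons, Matrix.of_apply, Fin.isValue, pCoef] at h0 h1 h2 h3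
    have hGv1 : (((lamMu μc μm - (1/(2*(n:ℂ)+1))/2 + (((r):ℝ):ℂ)^2*(ω^2*dMu μc μm εc εm*sCoef n)) - τ₁ (r)) * ((lamEps εc εm + (1/(2*(n:ℂ)+1))/2 + (((r):ℝ):ℂ)^2*(ω^2*dEps μc μm εc εm*rCoef n)) - τ₁ (r)) - (((r):ℝ):ℂ)^2*((ω*cMu μc μm εc εm*qCoef n)*(ω*cEps μc μm εc εm*(1/(2*(n:ℂ)+1))))) * v 1 = 0 := by
      linear_combination ((lamEps εc εm + (1/(2*(n:ℂ)+1))/2 + (((r):ℝ):ℂ)^2*(ω^2*dEps μc μm εc εm*rCoef n)) - τ₁ r) * h1 - (((r:ℝ):ℂ) * (ω*cMu μc μm εc εm*qCoef n)) * h2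
    have hGv2 : (((lamMu μc μm - (1/(2*(n:ℂ)+1))/2 + (((r):ℝ):ℂ)^2*(ω^2*dMu μc μm εc εm*sCoef n)) - τ₁ (r)) * ((lamEps εc εm + (1/(2*(n:ℂ)+1))/2 + (((r):ℝ):ℂ)^2*(ω^2*dEps μc μm εc εm*rCoef n)) - τ₁ (r)) - (((r):ℝ):ℂ)^2*((ω*cMu μc μm εc εm*qCoef n)*(ω*cEps μc μm εc εm*(1/(2*(n:ℂ)+1))))) * v 2 = 0 := by
      linear_combination ((lamMu μc μm - (1/(2*(n:ℂ)+1))/2 + (((r):ℝ):ℂ)^2*(ω^2*dMu μc μm εc εm*sCoef n)) - τ₁ r) * h2 - (((r:ℝ):ℂ) * (ω*cEps μc μm εc εm*(1/(2*(n:ℂ)+1)))) * h1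
    have hv1 : v 1 = 0 := (mul_eq_zero.mp hGv1).resolve_left hGr
    have hv2 : v 2 = 0 := (mul_eq_zero.mp hGv2).resolve_left hGr
    have hf0 : (((lamMu μc μm + (1/(2*(n:ℂ)+1))/2 + (((r):ℝ):ℂ)^2*(ω^2*dMu μc μm εc εm*rCoef n)) - τ₁ r) * ((lamEps εc εm - (1/(2*(n:ℂ)+1))/2 + (((r):ℝ):ℂ)^2*(ω^2*dEps μc μm εc εm*sCoef n)) - τ₁ r) - ((r:ℝ):ℂ)^2*((ω*cMu μc μm εc εm*(1/(2*(n:ℂ)+1)))*(ω*cEps μc μm εc εm*qCoef n))) * v 0 = 0 := by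
      linear_combination ((lamEps εc εm - (1/(2*(n:ℂ)+1))/2 + (((r):ℝ):ℂ)^2*(ω^2*dEps μc μm εc εm*sCoef n)) - τ₁ r) * h0 - (((r:ℝ):ℂ) * (ω*cMu μc μm εc εm*(1/(2*(n:ℂ)+1)))) * h3
    have hf3 : (((lamMu μc μm + (1/(2*(n:ℂ)+1))/2 + (((r):ℝ):ℂ)^2*(ω^2*dMu μc μm εc εm*rCoef n)) - τ₁ r) * ((lamEps εc εm - (1/(2*(n:ℂ)+1))/2 + (((r):ℝ):ℂ)^2*(ω^2*dEps μc μm εc εm*sCoef n)) - τ₁ r) - ((r:ℝ):ℂ)^2*((ω*cMu μc μm εc εm*(1/(2*(n:ℂ)+1)))*(ω*cEps μc μm εc εm*qCoef n))) * v 3 = 0 := by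
      linear_combination ((lamMu μc μm + (1/(2*(n:ℂ)+1))/2 + (((r):ℝ):ℂ)^2*(ω^2*dMu μc μm εc εm*rCoef n)) - τ₁ r) * h3 - (((r:ℝ):ℂ) * (ω*cEps μc μm εc εm*qCoef n)) * h0
    have hf : ((lamMu μc μm + (1/(2*(n:ℂ)+1))/2 + (((r):ℝ):ℂ)^2*(ω^2*dMu μc μm εc εm*rCoef n)) - τ₁ r) * ((lamEps εc εm - (1/(2*(n:ℂ)+1))/2 + (((r):ℝ):ℂ)^2*(ω^2*dEps μc μm εc εm*sCoef n)) - τ₁ r) - ((r:ℝ):ℂ)^2*((ω*cMu μc μm εc εm*(1/(2*(n:ℂ)+1)))*(ω*cEps μc μm εc εm*qCoef n)) = 0 := by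
      by_cases h03 : v 0 = 0
      · refine (mul_eq_zero.mp hf3).resolve_right ?_
        intro h3z
        exact hv (funext fun i => by fin_cases i <;> simp [h03, hv1, hv2, h3z])
      · exact (mul_eq_zero.mp hf0).resolve_right h03
    linear_combination hf
  -- limit of the eigenvalue shift
  have hδc : Filter.Tendsto (fun r : ℝ => (τ₁ (r) - (lamMu μc μm + (1/(2*(n:ℂ)+1))/2 + (((r):ℝ):ℂ)^2*(ω^2*dMu μc μm εc εm*rCoef n)))) (nhds 0) (nhds 0) := by
    have h1 : ContinuousAt (fun r : ℝ => (lamMu μc μm + (1/(2*(n:ℂ)+1))/2 + (((r):ℝ):ℂ)^2*(ω^2*dMu μc μm εc εm*rCoef n))) 0 :=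
      continuousAt_const.add ((hcr.pow 2).mul continuousAt_const)
    have h2 := hτc.sub h1
    unfold ContinuousAt at h2
    convert h2 using 2
    · rfl
    simp only [Pi.sub_apply, hτ0'']; push_cast; ring
  have hmain := scalar_asymp_aux (lamMu μc μm - lamEps εc εm + (1/(2*(n:ℂ)+1))) (ω^2*cMu μc μm εc εm*cEps μc μm εc εm*(1/(2*(n:ℂ)+1))*qCoef n) (ω^2*(dMu μc μm εc εm*rCoef n - dEps μc μm εc εm*sCoef n)) hplus' (fun r : ℝ => (τ₁ (r) - (lamMu μc μm + (1/(2*(n:ℂ)+1))/2 + (((r):ℝ):ℂ)^2*(ω^2*dMu μc μm εc εm*rCoef n)))) hδc heq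
  have hfuneq : (fun r : ℝ => τ₁ r -
      (lamMu μc μm + 1 / (2 * (2 * (n : ℂ) + 1)) +
        ((r : ℂ) * ω) ^ 2 *
          (cEps μc μm εc εm * cMu μc μm εc εm * pCoef n * qCoef n / (lamMu μc μm - lamEps εc εm + pCoef n) + dMu μc μm εc εm * rCoef n)))
      = fun r : ℝ => (τ₁ (r) - (lamMu μc μm + (1/(2*(n:ℂ)+1))/2 + (((r):ℝ):ℂ)^2*(ω^2*dMu μc μm εc εm*rCoef n))) - ((r:ℝ):ℂ)^2 * (ω^2*cMu μc μm εc εm*cEps μc μm εc εm*(1/(2*(n:ℂ)+1))*qCoef n) / (lamMu μc μm - lamEps εc εm + (1/(2*(n:ℂ)+1))) := by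
    funext r
    simp only [pCoef]
    rw [hhalf]
    ring
  rw [hfuneq]
  exact hmain
end

section
/- For n ≥ 2, the scattering coefficients S_n^{TE} and S_n^{TM} of a sphere of radius r are O(r⁴) as r → 0 (in fact O(r^{2n+1})), where S_n^{TE} and S_n^{TM} are defined via spherical Bessel function quotients as in the sphere transmission problem. -/
open scoped Nat
open Complex

/-- The Rayleigh operator `(1/t d/dt)^n` applied to a function. -/
noncomputable def rayleigh : ℕ → (ℝ → ℝ) → ℝ → ℝ
  | 0, f, t => f t
  | n + 1, f, t => deriv (rayleigh n f) t / t

/-- The spherical Bessel function of the first kind `j_n`. -/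
noncomputable def sphJ (n : ℕ) (t : ℝ) : ℝ :=
  (-1 : ℝ) ^ n * t ^ n * rayleigh n (fun s => Real.sin s / s) t

/-- The spherical Bessel function of the second kind `y_n`. -/
noncomputable def sphY (n : ℕ) (t : ℝ) : ℝ :=
  -((-1 : ℝ) ^ n * t ^ n * rayleigh n (fun s => Real.cos s / s) t)

/-- The spherical Hankel function of the first kind `h_n^{(1)} = j_n + i y_n`. -/
noncomputable def sphH (n : ℕ) (t : ℝ) : ℂ :=
  (sphJ n t : ℂ) + Complex.I * (sphY n t : ℂ)

/-- `𝒥_n(t) = j_n(t) + t j_n'(t)`. -/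
noncomputable def sphJcal (n : ℕ) (t : ℝ) : ℝ := sphJ n t + t * deriv (sphJ n) t

/-- `ℋ_n(t) = h_n^{(1)}(t) + t (h_n^{(1)})'(t)`. -/
noncomputable def sphHcal (n : ℕ) (t : ℝ) : ℂ := sphH n t + (t : ℂ) * deriv (sphH n) t

/-- The TE scattering coefficient `S_n^{TE}` of a sphere of radius `r`. -/
noncomputable def STE (n : ℕ) (μm μc : ℂ) (km kc : ℝ) (r : ℝ) : ℂ :=
  (μc * (sphJ n (kc * r) : ℂ) * (sphJcal n (km * r) : ℂ) -
      μm * (sphJ n (km * r) : ℂ) * (sphJcal n (kc * r) : ℂ)) /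
    (μm * (sphJcal n (kc * r) : ℂ) * sphH n (km * r) -
      μc * (sphJ n (kc * r) : ℂ) * sphHcal n (km * r))

/-- The TM scattering coefficient `S_n^{TM}` of a sphere of radius `r`. -/
noncomputable def STM (n : ℕ) (εm εc : ℂ) (km kc : ℝ) (r : ℝ) : ℂ :=
  (εc * (sphJ n (kc * r) : ℂ) * (sphJcal n (km * r) : ℂ) -
      εm * (sphJ n (km * r) : ℂ) * (sphJcal n (kc * r) : ℂ)) /
    (εm * (sphJcal n (kc * r) : ℂ) * sphH n (km * r) -
      εc * (sphJ n (kc * r) : ℂ) * sphHcal n (km * r))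


section AuxSphere
open MeasureTheory intervalIntegral Polynomial Filter

noncomputable def Fj (n : ℕ) (t : ℝ) : ℝ :=
  ((-1 : ℝ) ^ n / (2 ^ (n + 1) * n !)) * ∫ s in (-1:ℝ)..1, Real.cos (t * s) * (1 - s ^ 2) ^ n

lemma hasDerivAt_int (n : ℕ) (t : ℝ) :
    HasDerivAt (fun x => ∫ s in (-1:ℝ)..1, Real.cos (x * s) * (1 - s ^ 2) ^ n)
      (∫ s in (-1:ℝ)..1, -(s * Real.sin (t * s)) * (1 - s ^ 2) ^ n) t := by
  have := intervalIntegral.hasDerivAt_integral_of_dominated_loc_of_deriv_le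
    (F := fun x s => Real.cos (x * s) * (1 - s ^ 2) ^ n)
    (F' := fun x s => -(s * Real.sin (x * s)) * (1 - s ^ 2) ^ n)
    (x₀ := t) (a := -1) (b := 1) (μ := volume) (bound := fun _ => 1)
    (s := Metric.ball t 1) (Metric.ball_mem_nhds t one_pos)
    (Filter.Eventually.of_forall fun x => (by fun_prop : Continuous fun s : ℝ => Real.cos (x * s) * (1 - s ^ 2) ^ n).aestronglyMeasurable)
    ((by fun_prop : Continuous fun s : ℝ => Real.cos (t * s) * (1 - s ^ 2) ^ n).intervalIntegrable _ _)
    ((by fun_prop : Continuous fun s : ℝ => -(s * Real.sin (t * s)) * (1 - s ^ 2) ^ n).aestronglyMeasurable)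
    ?_ (intervalIntegrable_const)
    ?_
  · exact this.2
  · refine Filter.Eventually.of_forall fun s hs x _ => ?_
    have hs' : s ∈ Set.Ioc (-1:ℝ) 1 := by
      simpa [Set.uIoc_of_le (by norm_num : (-1:ℝ) ≤ 1)] using hs
    have h1 : |s| ≤ 1 := abs_le.2 ⟨le_of_lt hs'.1, hs'.2⟩
    have h2 : |1 - s ^ 2| ≤ 1 := by
      rw [abs_le]
      constructor <;> nlinarith [sq_nonneg s, abs_le.1 h1]
    calc ‖-(s * Real.sin (x * s)) * (1 - s ^ 2) ^ n‖
        = |s| * |Real.sin (x * s)| * |1 - s ^ 2| ^ n := by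
          simp [abs_mul, abs_pow, mul_assoc]
      _ ≤ 1 * 1 * 1 ^ n := by
          gcongr
          exact Real.abs_sin_le_one _
      _ = 1 := by simp
  · refine Filter.Eventually.of_forall fun s _ x _ => ?_
    have h : HasDerivAt (fun x : ℝ => Real.cos (x * s)) (-Real.sin (x * s) * s) x :=
      (hasDerivAt_mul_const s).cos
    simpa [mul_comm, mul_left_comm, mul_assoc] using h.mul_const ((1 - s ^ 2) ^ n)


lemma parts (n : ℕ) (t : ℝ) :
    ∫ s in (-1:ℝ)..1, -(s * Real.sin (t * s)) * (1 - s ^ 2) ^ n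
      = -(t / (2 * n + 2)) * ∫ s in (-1:ℝ)..1, Real.cos (t * s) * (1 - s ^ 2) ^ (n + 1) := by
  have hu : ∀ x ∈ Set.uIcc (-1:ℝ) 1,
      HasDerivAt (fun s : ℝ => (1 - s ^ 2) ^ (n + 1) / (2 * n + 2))
        (-(x * (1 - x ^ 2) ^ n)) x := by
    intro x _
    have h1 : HasDerivAt (fun s : ℝ => 1 - s ^ 2) (-(2 * x)) x := by
      simpa using ((hasDerivAt_pow 2 x).const_sub 1)
    have h2 := (h1.pow (n + 1)).div_const (2 * n + 2)
    refine h2.congr_deriv ?_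
    have : ((n : ℝ) + 1) ≠ 0 := by positivity
    have h2n : (2 * (n:ℝ) + 2) ≠ 0 := by positivity
    rw [div_eq_iff h2n, Nat.add_sub_cancel]
    push_cast
    ring
  have hv : ∀ x ∈ Set.uIcc (-1:ℝ) 1,
      HasDerivAt (fun s : ℝ => Real.sin (t * s)) (Real.cos (t * x) * t) x := by
    intro x _
    simpa [mul_comm] using (hasDerivAt_mul_const t (x := x)).sin
  have key := intervalIntegral.integral_deriv_mul_eq_sub hu hv
    ((by fun_prop : Continuous fun x : ℝ => -(x * (1 - x ^ 2) ^ n)).intervalIntegrable _ _)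
    ((by fun_prop : Continuous fun x : ℝ => Real.cos (t * x) * t).intervalIntegrable _ _)
  -- key : ∫ u' v + u v' = 0
  have h0 : ((1:ℝ) - 1 ^ 2) ^ (n+1) / (2 * n + 2) * Real.sin (t * 1)
      - (1 - (-1:ℝ) ^ 2) ^ (n+1) / (2 * n + 2) * Real.sin (t * (-1)) = 0 := by norm_num
  rw [h0] at key
  have split := intervalIntegral.integral_add (μ := volume) (a := (-1:ℝ)) (b := (1:ℝ))
    ((by fun_prop : Continuous fun x : ℝ => -(x * (1 - x ^ 2) ^ n) * Real.sin (t * x)).intervalIntegrable _ _)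
    ((by fun_prop : Continuous fun x : ℝ => (1 - x ^ 2) ^ (n+1) / (2 * n + 2) * (Real.cos (t * x) * t)).intervalIntegrable _ _)
  rw [split] at key
  have e1 : (∫ s in (-1:ℝ)..1, -(s * Real.sin (t * s)) * (1 - s ^ 2) ^ n)
      = ∫ x in (-1:ℝ)..1, -(x * (1 - x ^ 2) ^ n) * Real.sin (t * x) := by
    congr 1; funext s; ring
  have e2 : (∫ x in (-1:ℝ)..1, (1 - x ^ 2) ^ (n+1) / (2 * n + 2) * (Real.cos (t * x) * t))
      = (t / (2 * n + 2)) * ∫ s in (-1:ℝ)..1, Real.cos (t * s) * (1 - s ^ 2) ^ (n + 1) := by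
    rw [← intervalIntegral.integral_const_mul]
    congr 1; funext s; ring
  rw [e2] at key
  rw [e1]
  linarith [key]

lemma hasDerivAt_Fj (n : ℕ) (t : ℝ) : HasDerivAt (Fj n) (t * Fj (n + 1) t) t := by
  have h := ((hasDerivAt_int n t).const_mul ((-1 : ℝ) ^ n / (2 ^ (n + 1) * n !)))
  have : ((-1 : ℝ) ^ n / (2 ^ (n + 1) * n !)) * ∫ s in (-1:ℝ)..1, -(s * Real.sin (t * s)) * (1 - s ^ 2) ^ n
      = t * Fj (n + 1) t := by
    rw [parts n t, Fj]
    have h1 : ((n ! : ℕ) : ℝ) ≠ 0 := Nat.cast_ne_zero.2 (Nat.factorial_ne_zero n)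
    have h2 : ((n:ℝ) + 1) ≠ 0 := by positivity
    rw [Nat.factorial_succ]
    push_cast
    field_simp
    ring
  exact this ▸ h

lemma Fj0_ne (n : ℕ) : Fj n 0 ≠ 0 := by
  rw [Fj]
  apply mul_ne_zero
  · apply div_ne_zero (pow_ne_zero _ (by norm_num : (-1:ℝ) ≠ 0))
    have h1 : (0:ℝ) < 2 ^ (n + 1) := by positivity
    have h2 : (0:ℝ) < (n ! : ℝ) := by
      exact_mod_cast Nat.factorial_pos n
    positivity
  · have hpos : 0 < ∫ s in (-1:ℝ)..1, Real.cos (0 * s) * (1 - s ^ 2) ^ n := by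
      simp only [zero_mul, Real.cos_zero, one_mul]
      apply intervalIntegral_pos_of_pos_on
      · exact (by fun_prop : Continuous fun s : ℝ => (1 - s ^ 2) ^ n).intervalIntegrable _ _
      · intro x hx
        have h1 : (0:ℝ) < 1 - x ^ 2 := by nlinarith [hx.1, hx.2]
        positivity
      · norm_num
    exact ne_of_gt hpos

lemma rayleigh_sin_eq (n : ℕ) : ∀ t : ℝ, t ≠ 0 →
    rayleigh n (fun s => Real.sin s / s) t = Fj n t := by
  induction n with
  | zero =>
    intro t ht
    have : ∫ s in (-1:ℝ)..1, Real.cos (t * s) * (1 - s ^ 2) ^ 0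
        = 2 * Real.sin t / t := by
      simp only [pow_zero, mul_one]
      rw [intervalIntegral.integral_comp_mul_left (fun u => Real.cos u) ht,
        integral_cos]
      simp [Real.sin_neg, smul_eq_mul]
      try ring
    simp only [rayleigh, Fj, this]
    field_simp
    norm_num
  | succ n ih =>
    intro t ht
    have hev : (fun s => rayleigh n (fun s => Real.sin s / s) s) =ᶠ[nhds t] Fj n := by
      filter_upwards [isOpen_ne.mem_nhds ht] with s hs
      exact ih s hs
    show deriv (rayleigh n fun s => Real.sin s / s) t / t = _
    rw [hev.deriv_eq, (hasDerivAt_Fj n t).deriv]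
    field_simp

noncomputable def PQ : ℕ → Polynomial ℝ × Polynomial ℝ
  | 0 => (1, 0)
  | n + 1 =>
    (C (-(2 * (n:ℝ) + 1)) * (PQ n).1 + 2 * X * derivative (PQ n).1 + X * (PQ n).2,
     C (-(2 * (n:ℝ))) * (PQ n).2 + 2 * X * derivative (PQ n).2 - (PQ n).1)

noncomputable def Gy (n : ℕ) (t : ℝ) : ℝ :=
  ((PQ n).1.eval (t ^ 2) * Real.cos t + t * (PQ n).2.eval (t ^ 2) * Real.sin t) / t ^ (2 * n + 1)

lemma hasDerivAt_Gy (n : ℕ) (t : ℝ) (ht : t ≠ 0) :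
    HasDerivAt (Gy n) (t * Gy (n + 1) t) t := by
  have hx : HasDerivAt (fun s : ℝ => s ^ 2) (2 * t) t := by
    simpa using hasDerivAt_pow 2 t
  have hP : HasDerivAt (fun s : ℝ => (PQ n).1.eval (s ^ 2))
      ((derivative (PQ n).1).eval (t ^ 2) * (2 * t)) t :=
    by have := ((PQ n).1.hasDerivAt (t ^ 2)).comp t hx; exact this
  have hQ : HasDerivAt (fun s : ℝ => (PQ n).2.eval (s ^ 2))
      ((derivative (PQ n).2).eval (t ^ 2) * (2 * t)) t :=
    by have := ((PQ n).2.hasDerivAt (t ^ 2)).comp t hx; exact this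
  have hN : HasDerivAt (fun s : ℝ => (PQ n).1.eval (s ^ 2) * Real.cos s
        + s * (PQ n).2.eval (s ^ 2) * Real.sin s)
      (((derivative (PQ n).1).eval (t ^ 2) * (2 * t)) * Real.cos t
        + (PQ n).1.eval (t ^ 2) * (-Real.sin t)
        + (((PQ n).2.eval (t ^ 2) + t * ((derivative (PQ n).2).eval (t ^ 2) * (2 * t))) * Real.sin t
          + t * (PQ n).2.eval (t ^ 2) * Real.cos t)) t := by
    exact ((hP.mul (Real.hasDerivAt_cos t)).add
      (((hasDerivAt_id t).mul hQ).mul (Real.hasDerivAt_sin t))).congr_deriv (by simp)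
  have hD : HasDerivAt (fun s : ℝ => s ^ (2 * n + 1))
      ((2 * n + 1) * t ^ (2 * n)) t := by
    simpa using hasDerivAt_pow (2 * n + 1) t
  have h := hN.div hD (pow_ne_zero _ ht)
  apply h.congr_deriv
  simp only [Gy, PQ, eval_add, eval_mul, eval_sub, eval_ofNat, eval_C, eval_X, eval_pow]
  field_simp
  ring

lemma rayleigh_cos_eq (n : ℕ) : ∀ t : ℝ, t ≠ 0 →
    rayleigh n (fun s => Real.cos s / s) t = Gy n t := by
  induction n with
  | zero =>
    intro t ht
    simp [rayleigh, Gy, PQ]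
  | succ n ih =>
    intro t ht
    have hev : (fun s => rayleigh n (fun s => Real.cos s / s) s) =ᶠ[nhds t] Gy n := by
      filter_upwards [isOpen_ne.mem_nhds ht] with s hs
      exact ih s hs
    show deriv (rayleigh n fun s => Real.cos s / s) t / t = _
    rw [hev.deriv_eq, (hasDerivAt_Gy n t ht).deriv]
    field_simp

noncomputable def dy (n : ℕ) : ℝ := (PQ n).1.eval 0

lemma dy_succ (n : ℕ) : dy (n + 1) = -(2 * n + 1) * dy n := by
  simp [dy, PQ]

lemma dy_ne (n : ℕ) : dy n ≠ 0 := by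
  induction n with
  | zero => simp [dy, PQ]
  | succ n ih =>
    rw [dy_succ]
    refine mul_ne_zero ?_ ih
    have : (0:ℝ) < 2 * n + 1 := by positivity
    linarith

lemma tendsto_Gy (n : ℕ) :
    Tendsto (fun t : ℝ => t ^ (2 * n + 1) * Gy n t) (nhdsWithin 0 (Set.Ioi 0)) (nhds (dy n)) := by
  have hc : Tendsto (fun t : ℝ => (PQ n).1.eval (t ^ 2) * Real.cos t
      + t * (PQ n).2.eval (t ^ 2) * Real.sin t) (nhdsWithin 0 (Set.Ioi 0)) (nhds (dy n)) := by
    have : Continuous (fun t : ℝ => (PQ n).1.eval (t ^ 2) * Real.cos t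
        + t * (PQ n).2.eval (t ^ 2) * Real.sin t) := by fun_prop
    have h0 := (this.tendsto 0).mono_left (nhdsWithin_le_nhds (s := Set.Ioi (0:ℝ)))
    simpa [dy] using h0
  refine hc.congr' ?_
  filter_upwards [self_mem_nhdsWithin] with t ht
  have ht' : t ≠ 0 := ne_of_gt ht
  rw [Gy]
  field_simp

-- continuity of Fj
lemma contFj (n : ℕ) : Continuous (Fj n) :=
  continuous_iff_continuousAt.2 fun t => (hasDerivAt_Fj n t).continuousAt

notation "L0" => nhdsWithin (0:ℝ) (Set.Ioi 0)

lemma tendsto_Fj (n : ℕ) : Tendsto (Fj n) L0 (nhds (Fj n 0)) :=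
  ((contFj n).tendsto 0).mono_left nhdsWithin_le_nhds

lemma npow_aux (n : ℕ) (t : ℝ) : (n : ℝ) * t ^ (n - 1) * t = n * t ^ n := by
  cases n with
  | zero => simp
  | succ m => simp [pow_succ]; ring

lemma sphJ_eq (n : ℕ) (t : ℝ) (ht : t ≠ 0) :
    sphJ n t = (-1 : ℝ) ^ n * t ^ n * Fj n t := by
  rw [sphJ, rayleigh_sin_eq n t ht]

lemma sphY_eq (n : ℕ) (t : ℝ) (ht : t ≠ 0) :
    sphY n t = -((-1 : ℝ) ^ n * t ^ n * Gy n t) := by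
  rw [sphY, rayleigh_cos_eq n t ht]

lemma hasDerivAt_sphJ (n : ℕ) (t : ℝ) (ht : t ≠ 0) :
    HasDerivAt (sphJ n)
      ((-1:ℝ) ^ n * ((n:ℝ) * t ^ (n - 1)) * Fj n t + (-1:ℝ) ^ n * t ^ n * (t * Fj (n + 1) t)) t := by
  have h : HasDerivAt (fun s : ℝ => (-1:ℝ) ^ n * s ^ n * Fj n s)
      ((-1:ℝ) ^ n * ((n:ℝ) * t ^ (n - 1)) * Fj n t + (-1:ℝ) ^ n * t ^ n * (t * Fj (n + 1) t)) t := by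
    exact (((hasDerivAt_pow n t).const_mul ((-1:ℝ) ^ n)).mul (hasDerivAt_Fj n t)).congr_deriv (by ring)
  refine h.congr_of_eventuallyEq ?_
  filter_upwards [isOpen_ne.mem_nhds ht] with s hs
  exact sphJ_eq n s hs

lemma hasDerivAt_sphY (n : ℕ) (t : ℝ) (ht : t ≠ 0) :
    HasDerivAt (sphY n)
      (-((-1:ℝ) ^ n * ((n:ℝ) * t ^ (n - 1)) * Gy n t + (-1:ℝ) ^ n * t ^ n * (t * Gy (n + 1) t))) t := by
  have h : HasDerivAt (fun s : ℝ => -((-1:ℝ) ^ n * s ^ n * Gy n s))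
      (-((-1:ℝ) ^ n * ((n:ℝ) * t ^ (n - 1)) * Gy n t + (-1:ℝ) ^ n * t ^ n * (t * Gy (n + 1) t))) t := by
    have := (((hasDerivAt_pow n t).const_mul ((-1:ℝ) ^ n)).mul (hasDerivAt_Gy n t ht)).neg
    exact this
  refine h.congr_of_eventuallyEq ?_
  filter_upwards [isOpen_ne.mem_nhds ht] with s hs
  exact sphY_eq n s hs

lemma sphJcal_eq (n : ℕ) (t : ℝ) (ht : t ≠ 0) :
    sphJcal n t = (-1:ℝ) ^ n * t ^ n * (((n:ℝ) + 1) * Fj n t + t ^ 2 * Fj (n + 1) t) := by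
  rw [sphJcal, (hasDerivAt_sphJ n t ht).deriv, sphJ_eq n t ht]
  have hpow : (n:ℝ) * t ^ (n - 1) = (n:ℝ) * t ^ n / t := by
    cases n with
    | zero => simp
    | succ m => field_simp [pow_succ]; rw [Nat.add_sub_cancel, pow_succ]
  rw [hpow]
  field_simp
  ring

lemma sphYcal_eq (n : ℕ) (t : ℝ) (ht : t ≠ 0) :
    sphY n t + t * deriv (sphY n) t
      = -((-1:ℝ) ^ n * t ^ n * (((n:ℝ) + 1) * Gy n t + t ^ 2 * Gy (n + 1) t)) := by
  rw [(hasDerivAt_sphY n t ht).deriv, sphY_eq n t ht]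
  have hpow : (n:ℝ) * t ^ (n - 1) = (n:ℝ) * t ^ n / t := by
    cases n with
    | zero => simp
    | succ m => field_simp [pow_succ]; rw [Nat.add_sub_cancel, pow_succ]
  rw [hpow]
  field_simp
  ring

-- limits
lemma tendsto_J (n : ℕ) :
    Tendsto (fun t : ℝ => sphJ n t / t ^ n) L0 (nhds ((-1:ℝ) ^ n * Fj n 0)) := by
  refine ((tendsto_Fj n).const_mul ((-1:ℝ) ^ n)).congr' ?_
  filter_upwards [self_mem_nhdsWithin] with t ht
  have ht' : t ≠ 0 := ne_of_gt ht
  rw [sphJ_eq n t ht']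
  field_simp

lemma tendsto_Jcal (n : ℕ) :
    Tendsto (fun t : ℝ => sphJcal n t / t ^ n) L0
      (nhds (((n:ℝ) + 1) * ((-1:ℝ) ^ n * Fj n 0))) := by
  have hcont : Continuous fun t : ℝ => (-1:ℝ) ^ n * (((n:ℝ) + 1) * Fj n t + t ^ 2 * Fj (n + 1) t) :=
    continuous_const.mul ((continuous_const.mul (contFj n)).add ((continuous_pow 2).mul (contFj (n+1))))
  have hbase := (hcont.tendsto 0).mono_left (nhdsWithin_le_nhds (s := Set.Ioi (0:ℝ)))
  rw [show ((-1:ℝ) ^ n * (((n:ℝ) + 1) * Fj n 0 + 0 ^ 2 * Fj (n + 1) 0))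
      = ((n:ℝ) + 1) * ((-1:ℝ) ^ n * Fj n 0) from by ring] at hbase
  refine hbase.congr' ?_
  filter_upwards [self_mem_nhdsWithin] with t ht
  have ht' : t ≠ 0 := ne_of_gt ht
  rw [sphJcal_eq n t ht']
  field_simp

lemma tendsto_ytJ (n : ℕ) :
    Tendsto (fun t : ℝ => t ^ (n + 1) * sphJ n t) L0 (nhds 0) := by
  have hid : Tendsto (fun t : ℝ => t ^ (2 * n + 1)) L0 (nhds 0) := by
    have := ((continuous_id.pow (2 * n + 1)).tendsto 0).mono_left
      (nhdsWithin_le_nhds (s := Set.Ioi (0:ℝ)))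
    exact (by simpa using this : Tendsto (id ^ (2 * n + 1)) L0 (nhds 0))
  have hbase : Tendsto (fun t : ℝ => t ^ (2 * n + 1) * ((-1:ℝ) ^ n * Fj n t)) L0 (nhds 0) := by
    simpa using hid.mul ((tendsto_Fj n).const_mul ((-1:ℝ) ^ n))
  refine hbase.congr' ?_
  filter_upwards [self_mem_nhdsWithin] with t ht
  rw [sphJ_eq n t (ne_of_gt ht)]
  ring

lemma tendsto_ytJcal (n : ℕ) :
    Tendsto (fun t : ℝ => t ^ (n + 1) * sphJcal n t) L0 (nhds 0) := by
  have hid : Tendsto (fun t : ℝ => t ^ (2 * n + 1)) L0 (nhds 0) := by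
    have := ((continuous_id.pow (2 * n + 1)).tendsto 0).mono_left
      (nhdsWithin_le_nhds (s := Set.Ioi (0:ℝ)))
    exact (by simpa using this : Tendsto (id ^ (2 * n + 1)) L0 (nhds 0))
  have hcont : Continuous fun t : ℝ => (-1:ℝ) ^ n * (((n:ℝ) + 1) * Fj n t + t ^ 2 * Fj (n + 1) t) :=
    continuous_const.mul ((continuous_const.mul (contFj n)).add ((continuous_pow 2).mul (contFj (n+1))))
  have hbase := hid.mul ((hcont.tendsto 0).mono_left (nhdsWithin_le_nhds (s := Set.Ioi (0:ℝ))))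
  rw [zero_mul] at hbase
  refine hbase.congr' ?_
  filter_upwards [self_mem_nhdsWithin] with t ht
  rw [sphJcal_eq n t (ne_of_gt ht)]
  ring

lemma tendsto_Y (n : ℕ) :
    Tendsto (fun t : ℝ => t ^ (n + 1) * sphY n t) L0 (nhds (-((-1:ℝ) ^ n * dy n))) := by
  have hbase := (tendsto_Gy n).const_mul ((-1:ℝ) ^ n)
  have : Tendsto (fun t : ℝ => -((-1:ℝ) ^ n * (t ^ (2 * n + 1) * Gy n t))) L0
      (nhds (-((-1:ℝ) ^ n * dy n))) := hbase.neg
  refine this.congr' ?_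
  filter_upwards [self_mem_nhdsWithin] with t ht
  rw [sphY_eq n t (ne_of_gt ht)]
  ring

lemma tendsto_Ycal (n : ℕ) :
    Tendsto (fun t : ℝ => t ^ (n + 1) * (sphY n t + t * deriv (sphY n) t)) L0
      (nhds ((-1:ℝ) ^ n * (n:ℝ) * dy n)) := by
  have hbase : Tendsto
      (fun t : ℝ => -((-1:ℝ) ^ n * (((n:ℝ) + 1) * (t ^ (2 * n + 1) * Gy n t)
        + t ^ (2 * (n + 1) + 1) * Gy (n + 1) t))) L0
      (nhds (-((-1:ℝ) ^ n * (((n:ℝ) + 1) * dy n + dy (n + 1))))) :=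
    ((((tendsto_Gy n).const_mul _).add (tendsto_Gy (n + 1))).const_mul _).neg
  have heq : -((-1:ℝ) ^ n * (((n:ℝ) + 1) * dy n + dy (n + 1)))
      = (-1:ℝ) ^ n * (n:ℝ) * dy n := by
    rw [dy_succ]
    ring
  rw [heq] at hbase
  refine hbase.congr' ?_
  filter_upwards [self_mem_nhdsWithin] with t ht
  rw [sphYcal_eq n t (ne_of_gt ht)]
  ring

lemma sphHcal_eq (n : ℕ) (t : ℝ) (ht : t ≠ 0) :
    sphHcal n t = ((sphJcal n t : ℝ) : ℂ)
      + Complex.I * ((sphY n t + t * deriv (sphY n) t : ℝ) : ℂ) := by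
  have hJd := hasDerivAt_sphJ n t ht
  have hYd := hasDerivAt_sphY n t ht
  have hH : HasDerivAt (fun y : ℝ => ((sphJ n y : ℝ) : ℂ) + Complex.I * ((sphY n y : ℝ) : ℂ)) _ t := hJd.ofReal_comp.add ((hYd.ofReal_comp).const_mul Complex.I)
  have hfun : sphH n = fun y : ℝ => ((sphJ n y : ℝ) : ℂ) + Complex.I * ((sphY n y : ℝ) : ℂ) := rfl
  rw [sphHcal, hfun, hH.deriv, sphJcal, hJd.deriv, hYd.deriv]
  push_cast
  ring

lemma tendsto_H (n : ℕ) :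
    Tendsto (fun t : ℝ => (t : ℂ) ^ (n + 1) * sphH n t) L0
      (nhds (Complex.I * ((-((-1:ℝ) ^ n * dy n) : ℝ) : ℂ))) := by
  have h1 : Tendsto (fun t : ℝ => ((t ^ (n + 1) * sphJ n t : ℝ) : ℂ)) L0 (nhds ((0:ℝ):ℂ)) :=
    (Complex.continuous_ofReal.tendsto _).comp (tendsto_ytJ n)
  have h2 : Tendsto (fun t : ℝ => ((t ^ (n + 1) * sphY n t : ℝ) : ℂ)) L0
      (nhds ((-((-1:ℝ) ^ n * dy n) : ℝ) : ℂ)) :=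
    (Complex.continuous_ofReal.tendsto _).comp (tendsto_Y n)
  have := h1.add (h2.const_mul Complex.I)
  simp only [Complex.ofReal_zero, zero_add] at this
  refine this.congr' ?_
  filter_upwards with t
  rw [sphH]
  push_cast
  ring

lemma tendsto_Hcal (n : ℕ) :
    Tendsto (fun t : ℝ => (t : ℂ) ^ (n + 1) * sphHcal n t) L0
      (nhds (Complex.I * (((-1:ℝ) ^ n * (n:ℝ) * dy n : ℝ) : ℂ))) := by
  have h1 : Tendsto (fun t : ℝ => ((t ^ (n + 1) * sphJcal n t : ℝ) : ℂ)) L0 (nhds ((0:ℝ):ℂ)) :=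
    (Complex.continuous_ofReal.tendsto _).comp (tendsto_ytJcal n)
  have h2 : Tendsto (fun t : ℝ => ((t ^ (n + 1) * (sphY n t + t * deriv (sphY n) t) : ℝ) : ℂ)) L0
      (nhds (((-1:ℝ) ^ n * (n:ℝ) * dy n : ℝ) : ℂ)) :=
    (Complex.continuous_ofReal.tendsto _).comp (tendsto_Ycal n)
  have := h1.add (h2.const_mul Complex.I)
  simp only [Complex.ofReal_zero, zero_add] at this
  refine this.congr' ?_
  filter_upwards [self_mem_nhdsWithin] with t ht
  rw [sphHcal_eq n t (ne_of_gt ht)]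
  push_cast
  ring

lemma tendsto_scale (k : ℝ) (hk : 0 < k) : Tendsto (fun r : ℝ => k * r) L0 L0 := by
  rw [tendsto_nhdsWithin_iff]
  constructor
  · have h : Continuous fun r : ℝ => k * r := by fun_prop
    have := (h.tendsto 0).mono_left (nhdsWithin_le_nhds (s := Set.Ioi (0:ℝ)))
    simpa using this
  · filter_upwards [self_mem_nhdsWithin] with r hr
    exact mul_pos hk hr

lemma cJ_lim (n : ℕ) (k : ℝ) (hk : 0 < k) :
    Tendsto (fun r : ℝ => ((sphJ n (k * r) / r ^ n : ℝ) : ℂ)) L0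
      (nhds ((k ^ n * ((-1:ℝ) ^ n * Fj n 0) : ℝ) : ℂ)) := by
  have h := (tendsto_J n).comp (tendsto_scale k hk)
  have h2 := h.const_mul (k ^ n)
  have h3 : Tendsto (fun r : ℝ => sphJ n (k * r) / r ^ n) L0
      (nhds (k ^ n * ((-1:ℝ) ^ n * Fj n 0))) := by
    refine h2.congr' ?_
    filter_upwards [self_mem_nhdsWithin] with r hr
    have hr0 : r ≠ 0 := ne_of_gt hr
    have hk0 : k ≠ 0 := ne_of_gt hk
    show k ^ n * (sphJ n (k * r) / (k * r) ^ n) = _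
    rw [mul_pow]
    field_simp
  exact (Complex.continuous_ofReal.tendsto _).comp h3

lemma cJcal_lim (n : ℕ) (k : ℝ) (hk : 0 < k) :
    Tendsto (fun r : ℝ => ((sphJcal n (k * r) / r ^ n : ℝ) : ℂ)) L0
      (nhds ((k ^ n * (((n:ℝ) + 1) * ((-1:ℝ) ^ n * Fj n 0)) : ℝ) : ℂ)) := by
  have h := (tendsto_Jcal n).comp (tendsto_scale k hk)
  have h2 := h.const_mul (k ^ n)
  have h3 : Tendsto (fun r : ℝ => sphJcal n (k * r) / r ^ n) L0
      (nhds (k ^ n * (((n:ℝ) + 1) * ((-1:ℝ) ^ n * Fj n 0)))) := by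
    refine h2.congr' ?_
    filter_upwards [self_mem_nhdsWithin] with r hr
    have hr0 : r ≠ 0 := ne_of_gt hr
    have hk0 : k ≠ 0 := ne_of_gt hk
    show k ^ n * (sphJcal n (k * r) / (k * r) ^ n) = _
    rw [mul_pow]
    field_simp
  exact (Complex.continuous_ofReal.tendsto _).comp h3

lemma cH_lim (n : ℕ) (k : ℝ) (hk : 0 < k) :
    Tendsto (fun r : ℝ => (r : ℂ) ^ (n + 1) * sphH n (k * r)) L0
      (nhds ((((k ^ (n + 1))⁻¹ : ℝ) : ℂ) * (Complex.I * ((-((-1:ℝ) ^ n * dy n) : ℝ) : ℂ)))) := by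
  have h := (tendsto_H n).comp (tendsto_scale k hk)
  have h2 := h.const_mul ((((k ^ (n + 1))⁻¹ : ℝ) : ℂ))
  refine h2.congr' ?_
  filter_upwards with r
  have hk0 : (k : ℂ) ≠ 0 := Complex.ofReal_ne_zero.2 (ne_of_gt hk)
  show (((k ^ (n+1))⁻¹ : ℝ) : ℂ) * (((k * r : ℝ) : ℂ) ^ (n+1) * sphH n (k * r)) = _
  push_cast
  rw [mul_pow]
  field_simp

lemma cHcal_lim (n : ℕ) (k : ℝ) (hk : 0 < k) :
    Tendsto (fun r : ℝ => (r : ℂ) ^ (n + 1) * sphHcal n (k * r)) L0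
      (nhds ((((k ^ (n + 1))⁻¹ : ℝ) : ℂ)
        * (Complex.I * (((-1:ℝ) ^ n * (n:ℝ) * dy n : ℝ) : ℂ)))) := by
  have h := (tendsto_Hcal n).comp (tendsto_scale k hk)
  have h2 := h.const_mul ((((k ^ (n + 1))⁻¹ : ℝ) : ℂ))
  refine h2.congr' ?_
  filter_upwards with r
  have hk0 : (k : ℂ) ≠ 0 := Complex.ofReal_ne_zero.2 (ne_of_gt hk)
  show (((k ^ (n+1))⁻¹ : ℝ) : ℂ) * (((k * r : ℝ) : ℂ) ^ (n+1) * sphHcal n (k * r)) = _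
  push_cast
  rw [mul_pow]
  field_simp

lemma STE_div_tendsto (n : ℕ) (μm μc : ℂ)
    (hμ : ((n : ℂ) + 1) * μm + (n : ℂ) * μc ≠ 0)
    (km kc : ℝ) (hkm : 0 < km) (hkc : 0 < kc) :
    ∃ c : ℂ, Tendsto (fun r : ℝ => STE n μm μc km kc r / (r : ℂ) ^ (2 * n + 1)) L0 (nhds c) := by
  have hA : ((-1:ℝ) ^ n * Fj n 0) ≠ 0 :=
    mul_ne_zero (pow_ne_zero _ (by norm_num)) (Fj0_ne n)
  have hB : ((-1:ℝ) ^ n * dy n) ≠ 0 :=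
    mul_ne_zero (pow_ne_zero _ (by norm_num)) (dy_ne n)
  have hNum := (((cJ_lim n kc hkc).const_mul μc).mul (cJcal_lim n km hkm)).sub
    (((cJ_lim n km hkm).const_mul μm).mul (cJcal_lim n kc hkc))
  have hDen := (((cJcal_lim n kc hkc).const_mul μm).mul (cH_lim n km hkm)).sub
    (((cJ_lim n kc hkc).const_mul μc).mul (cHcal_lim n km hkm))
  have hLD : μm * ((kc ^ n * (((n:ℝ) + 1) * ((-1:ℝ) ^ n * Fj n 0)) : ℝ) : ℂ)
        * ((((km ^ (n + 1))⁻¹ : ℝ) : ℂ) * (Complex.I * ((-((-1:ℝ) ^ n * dy n) : ℝ) : ℂ)))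
      - μc * ((kc ^ n * ((-1:ℝ) ^ n * Fj n 0) : ℝ) : ℂ)
        * ((((km ^ (n + 1))⁻¹ : ℝ) : ℂ) * (Complex.I * (((-1:ℝ) ^ n * (n:ℝ) * dy n : ℝ) : ℂ)))
      ≠ 0 := by
    have heq : μm * ((kc ^ n * (((n:ℝ) + 1) * ((-1:ℝ) ^ n * Fj n 0)) : ℝ) : ℂ)
        * ((((km ^ (n + 1))⁻¹ : ℝ) : ℂ) * (Complex.I * ((-((-1:ℝ) ^ n * dy n) : ℝ) : ℂ)))
      - μc * ((kc ^ n * ((-1:ℝ) ^ n * Fj n 0) : ℝ) : ℂ)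
        * ((((km ^ (n + 1))⁻¹ : ℝ) : ℂ) * (Complex.I * (((-1:ℝ) ^ n * (n:ℝ) * dy n : ℝ) : ℂ)))
      = -Complex.I * (((-1:ℝ) ^ n * Fj n 0 : ℝ) : ℂ) * (((-1:ℝ) ^ n * dy n : ℝ) : ℂ)
        * (kc : ℂ) ^ n * ((km : ℂ) ^ (n + 1))⁻¹ * (((n : ℂ) + 1) * μm + (n : ℂ) * μc) := by
      push_cast
      ring
    rw [heq]
    refine mul_ne_zero (mul_ne_zero (mul_ne_zero (mul_ne_zero (mul_ne_zero ?_ ?_) ?_) ?_) ?_) hμ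
    · simpa using Complex.I_ne_zero
    · exact Complex.ofReal_ne_zero.2 hA
    · exact Complex.ofReal_ne_zero.2 hB
    · exact pow_ne_zero _ (Complex.ofReal_ne_zero.2 (ne_of_gt hkc))
    · exact inv_ne_zero (pow_ne_zero _ (Complex.ofReal_ne_zero.2 (ne_of_gt hkm)))
  refine ⟨_, (hNum.div hDen hLD).congr' ?_⟩
  filter_upwards [self_mem_nhdsWithin] with r hr
  have hr0 : r ≠ 0 := ne_of_gt hr
  have hrC : (r : ℂ) ≠ 0 := Complex.ofReal_ne_zero.2 hr0
  have hden : μm * ((sphJcal n (kc * r) / r ^ n : ℝ) : ℂ) * ((r:ℂ) ^ (n+1) * sphH n (km * r))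
      - μc * ((sphJ n (kc * r) / r ^ n : ℝ) : ℂ) * ((r:ℂ) ^ (n+1) * sphHcal n (km * r))
      = (r : ℂ) * (μm * (sphJcal n (kc * r) : ℂ) * sphH n (km * r)
        - μc * (sphJ n (kc * r) : ℂ) * sphHcal n (km * r)) := by
    push_cast
    field_simp
    ring
  have hnum : μc * ((sphJ n (kc * r) / r ^ n : ℝ) : ℂ) * ((sphJcal n (km * r) / r ^ n : ℝ) : ℂ)
      - μm * ((sphJ n (km * r) / r ^ n : ℝ) : ℂ) * ((sphJcal n (kc * r) / r ^ n : ℝ) : ℂ)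
      = (μc * (sphJ n (kc * r) : ℂ) * (sphJcal n (km * r) : ℂ)
        - μm * (sphJ n (km * r) : ℂ) * (sphJcal n (kc * r) : ℂ)) / (r : ℂ) ^ (2 * n) := by
    push_cast
    field_simp
    try ring
    try exact Or.inl trivial
  simp only [Pi.div_apply]
  rw [hden, hnum, STE]
  by_cases hD : μm * (sphJcal n (kc * r) : ℂ) * sphH n (km * r)
      - μc * (sphJ n (kc * r) : ℂ) * sphHcal n (km * r) = 0
  · simp [hD]
  · field_simp
    try ring
    try exact Or.inl trivial

lemma bigO_of_tendsto (n : ℕ) (f : ℝ → ℂ) (c : ℂ)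
    (h : Tendsto (fun r : ℝ => f r / (r : ℂ) ^ (2 * n + 1)) L0 (nhds c))
    (m : ℕ) (hm : m ≤ 2 * n + 1) :
    f =O[L0] fun r : ℝ => r ^ m := by
  have hb : ∀ᶠ r in L0, ‖f r / (r : ℂ) ^ (2 * n + 1)‖ ≤ ‖c‖ + 1 :=
    h.norm.eventually (eventually_le_nhds (lt_add_one ‖c‖))
  have h01 : ∀ᶠ r in L0, r ∈ Set.Ioo (0:ℝ) 1 :=
    Ioo_mem_nhdsGT_of_mem (by constructor <;> norm_num)
  rw [Asymptotics.isBigO_iff]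
  refine ⟨‖c‖ + 1, ?_⟩
  filter_upwards [hb, h01] with r h1 hr
  have hr0 : (0:ℝ) < r := hr.1
  have hgabs : ‖((r:ℂ)) ^ (2 * n + 1)‖ = r ^ (2 * n + 1) := by
    rw [norm_pow]
    simp [Complex.norm_real, abs_of_pos hr0]
  have hgne : ‖((r:ℂ)) ^ (2 * n + 1)‖ ≠ 0 := by
    rw [hgabs]; positivity
  calc ‖f r‖ = ‖f r / (r:ℂ) ^ (2 * n + 1)‖ * ‖((r:ℂ)) ^ (2 * n + 1)‖ := by
        rw [norm_div, div_mul_cancel₀ _ hgne]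
    _ ≤ (‖c‖ + 1) * ‖((r:ℂ)) ^ (2 * n + 1)‖ :=
        mul_le_mul_of_nonneg_right h1 (norm_nonneg _)
    _ = (‖c‖ + 1) * r ^ (2 * n + 1) := by rw [hgabs]
    _ ≤ (‖c‖ + 1) * r ^ m := by
        have := pow_le_pow_of_le_one hr0.le hr.2.le hm
        have hc : (0:ℝ) ≤ ‖c‖ + 1 := by positivity
        nlinarith
    _ = (‖c‖ + 1) * ‖r ^ m‖ := by
        rw [Real.norm_eq_abs, abs_of_pos (by positivity)]


end AuxSphere

open Asymptotics Filter

/-- for `n ≥ 2` the scattering coefficients `S_n^{TE}` and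
`S_n^{TM}` of a sphere of radius `r` are `O(r⁴)` as `r → 0⁺` (in fact
`O(r^{2n+1})`). -/
theorem sphere_scattering_coefficients_higher_order
    (n : ℕ) (hn : 2 ≤ n) (μm μc εm εc : ℂ)
    (hμ : ((n : ℂ) + 1) * μm + (n : ℂ) * μc ≠ 0)
    (hε : ((n : ℂ) + 1) * εm + (n : ℂ) * εc ≠ 0)
    (km kc : ℝ) (hkm : 0 < km) (hkc : 0 < kc) :
    ((fun r : ℝ => STE n μm μc km kc r) =O[nhdsWithin 0 (Set.Ioi 0)] fun r : ℝ => r ^ 4) ∧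
    ((fun r : ℝ => STM n εm εc km kc r) =O[nhdsWithin 0 (Set.Ioi 0)] fun r : ℝ => r ^ 4) ∧
    ((fun r : ℝ => STE n μm μc km kc r) =O[nhdsWithin 0 (Set.Ioi 0)] fun r : ℝ => r ^ (2 * n + 1)) ∧
    ((fun r : ℝ => STM n εm εc km kc r) =O[nhdsWithin 0 (Set.Ioi 0)] fun r : ℝ => r ^ (2 * n + 1)) := by
  obtain ⟨c1, h1⟩ := STE_div_tendsto n μm μc hμ km kc hkm hkc
  obtain ⟨c2, h2⟩ := STE_div_tendsto n εm εc hε km kc hkm hkc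
  have hSTM : STM n εm εc km kc = STE n εm εc km kc := rfl
  have hm4 : 4 ≤ 2 * n + 1 := by omega
  refine ⟨bigO_of_tendsto n _ c1 h1 4 hm4, ?_, bigO_of_tendsto n _ c1 h1 _ le_rfl, ?_⟩
  · rw [hSTM]; exact bigO_of_tendsto n _ c2 h2 4 hm4
  · rw [hSTM]; exact bigO_of_tendsto n _ c2 h2 _ le_rfl
end
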